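/- Let $K$ be a compact Hausdorff space and suppose there exist an open set $V$ in $(B_{C(K)^*}, w^*)$ with $K\subseteq V$ and a continuous retraction $r: V\to K$ with $r|_K=\mathrm{id}_K$ (where $K$ is identified with the evaluation functionals in $B_{C(K)^*}$). Then $K$ can be written as a finite union of pathwise connected closed subsets. -/
import Mathlib


open scoped Topology

/-- If a compact Hausdorff space `K` (identified with the evaluation functionals in the
closed dual unit ball of `C(K)` with the weak* topology) is a neighborhood retract of
that ball, then `K` is a finite union of pathwise connected closed subsets. -/
theorem finite_union_path_connected_of_retract_of_dual_ball
    {K : Type*} [TopologicalSpace K] [CompactSpace K] [T2Space K]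
    (ι : K → WeakDual ℝ C(K, ℝ))
    (hι : ∀ (t : K) (h : C(K, ℝ)), ι t h = h t)
    (B : Set (WeakDual ℝ C(K, ℝ)))
    (hB : B = {φ : WeakDual ℝ C(K, ℝ) | ∀ f : C(K, ℝ), |φ f| ≤ ‖f‖})
    (V : Set (WeakDual ℝ C(K, ℝ)))
    (hVopen : ∃ U : Set (WeakDual ℝ C(K, ℝ)), IsOpen U ∧ V = U ∩ B)
    (hKV : Set.range ι ⊆ V)
    (r : WeakDual ℝ C(K, ℝ) → K)
    (hr : ContinuousOn r V)
    (hretr : ∀ t : K, r (ι t) = t) :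
    ∃ (n : ℕ) (C : Fin n → Set K),
      (∀ i, IsClosed (C i) ∧ IsPathConnected (C i)) ∧ (⋃ i, C i) = Set.univ := by
  classical
  obtain ⟨U, hUopen, hVU⟩ := hVopen
  haveI : LocallyConvexSpace ℝ (WeakDual ℝ C(K, ℝ)) := WeakBilin.locallyConvexSpace
  -- `B` is the polar of the closed unit ball, hence compact (Banach-Alaoglu).
  have hBpolar : B = WeakDual.polar ℝ (Metric.closedBall (0 : C(K, ℝ)) 1) := by
    rw [hB]
    ext φ
    rw [WeakDual.polar_def]
    constructor
    · intro hφ f hf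
      rw [Metric.mem_closedBall, dist_zero_right] at hf
      calc ‖φ f‖ = |φ f| := Real.norm_eq_abs _
        _ ≤ ‖f‖ := hφ f
        _ ≤ 1 := hf
    · intro hφ f
      rcases eq_or_ne f 0 with rfl | hf0
      · simp
      · have hn : ‖f‖ ≠ 0 := norm_ne_zero_iff.mpr hf0
        have hg : (‖f‖⁻¹ • f) ∈ Metric.closedBall (0 : C(K, ℝ)) 1 := by
          rw [Metric.mem_closedBall, dist_zero_right, norm_smul (‖f‖⁻¹) f, norm_inv, norm_norm,
            inv_mul_cancel₀ hn]
        have := hφ _ hg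
        rw [map_smul, smul_eq_mul, Real.norm_eq_abs, abs_mul, abs_inv, abs_norm] at this
        have h2 : ‖f‖⁻¹ * |φ f| ≤ 1 := this
        calc |φ f| = ‖f‖ * (‖f‖⁻¹ * |φ f|) := by field_simp
          _ ≤ ‖f‖ * 1 := by
              exact mul_le_mul_of_nonneg_left h2 (norm_nonneg f)
          _ = ‖f‖ := mul_one _
  have hBcompact : IsCompact B := by
    rw [hBpolar]
    exact WeakDual.isCompact_polar ℝ (Metric.closedBall_mem_nhds 0 one_pos)
  have hBconv : Convex ℝ B := by
    rw [hB]
    intro φ hφ ψ hψ a b ha hb hab f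
    calc |(a • φ + b • ψ) f| = |a * φ f + b * ψ f| := rfl
      _ ≤ |a * φ f| + |b * ψ f| := abs_add_le _ _
      _ = a * |φ f| + b * |ψ f| := by
          rw [abs_mul, abs_mul, abs_of_nonneg ha, abs_of_nonneg hb]
      _ ≤ a * ‖f‖ + b * ‖f‖ := by
          gcongr
          exacts [hφ f, hψ f]
      _ = ‖f‖ := by rw [← add_mul, hab, one_mul]
  have hιB : ∀ t : K, ι t ∈ B := by
    intro t
    rw [hB]
    intro f
    rw [hι]
    calc |f t| = ‖f t‖ := (Real.norm_eq_abs _).symm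
      _ ≤ ‖f‖ := f.norm_coe_le_norm t
  have hιU : ∀ t : K, ι t ∈ U := by
    intro t
    have : ι t ∈ V := hKV ⟨t, rfl⟩
    rw [hVU] at this
    exact this.1
  have hιcont : Continuous ι := by
    apply WeakDual.continuous_of_continuous_eval
    intro f
    have : (fun t : K => ι t f) = fun t => f t := funext fun t => hι t f
    rw [this]
    exact f.continuous
  -- for each point, a convex open neighborhood whose closure lies in U
  have key : ∀ t : K, ∃ W : Set (WeakDual ℝ C(K, ℝ)),
      IsOpen W ∧ Convex ℝ W ∧ ι t ∈ W ∧ closure W ⊆ U := by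
    intro t
    have hU_nhds : U ∈ 𝓝 (ι t) := hUopen.mem_nhds (hιU t)
    obtain ⟨T, hTnhds, hTclosed, hTU⟩ := exists_mem_nhds_isClosed_subset hU_nhds
    obtain ⟨W', ⟨hW'n, hW'c⟩, hW'T⟩ :=
      (LocallyConvexSpace.convex_basis (𝕜 := ℝ) (ι t)).mem_iff.mp hTnhds
    refine ⟨interior W', isOpen_interior, hW'c.interior,
      mem_interior_iff_mem_nhds.mpr hW'n, ?_⟩
    calc closure (interior W') ⊆ closure T :=
          closure_mono (interior_subset.trans hW'T)
      _ = T := hTclosed.closure_eq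
      _ ⊆ U := hTU
  choose W hWopen hWconv hWmem hWclU using key
  -- the compact convex pieces
  set S : K → Set (WeakDual ℝ C(K, ℝ)) := fun t => closure (W t) ∩ B with hS
  have hSV : ∀ t, S t ⊆ V := by
    intro t
    rw [hVU]
    exact Set.inter_subset_inter_left B (hWclU t)
  have hSconv : ∀ t, Convex ℝ (S t) := fun t => (hWconv t).closure.inter hBconv
  have hScompact : ∀ t, IsCompact (S t) := fun t => hBcompact.inter_left isClosed_closure
  have hSmem : ∀ t, ι t ∈ S t := fun t => ⟨subset_closure (hWmem t), hιB t⟩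
  -- pieces in K
  have hCgood : ∀ t : K, IsClosed (r '' S t) ∧ IsPathConnected (r '' S t) := by
    intro t
    constructor
    · exact ((hScompact t).image_of_continuousOn (hr.mono (hSV t))).isClosed
    · exact ((hSconv t).isPathConnected ⟨ι t, hSmem t⟩).image' (hr.mono (hSV t))
  -- finite subcover
  have hcover : (Set.univ : Set K) ⊆ ⋃ t : K, ι ⁻¹' W t := fun x _ =>
    Set.mem_iUnion.mpr ⟨x, hWmem x⟩
  obtain ⟨T, hT⟩ := isCompact_univ.elim_finite_subcover (fun t : K => ι ⁻¹' W t)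
    (fun t => (hWopen t).preimage hιcont) hcover
  refine ⟨T.card, fun i => r '' S ((T.equivFin.symm i : T) : K), fun i => hCgood _, ?_⟩
  apply Set.eq_univ_of_forall
  intro x
  have hx := hT (Set.mem_univ x)
  rw [Set.mem_iUnion₂] at hx
  obtain ⟨t, htT, hxt⟩ := hx
  rw [Set.mem_iUnion]
  refine ⟨T.equivFin ⟨t, htT⟩, ?_⟩
  have : (T.equivFin.symm (T.equivFin ⟨t, htT⟩) : K) = t := by
    rw [Equiv.symm_apply_apply]
  rw [this]
  exact ⟨ι x, ⟨subset_closure hxt, hιB x⟩, hretr x⟩
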